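/- Let D be a sun on at least 3 vertices with core R, and let w be any vertex of R. Then D has a subgraph F₂ each of whose components is a path on 4 vertices, such that F₂ covers every vertex of D except w and the pendant of w. -/

import Mathlib

/-- `H` is (isomorphic to) a path on `n` vertices. -/
def IsPathOn {W : Type*} (H : SimpleGraph W) (n : ℕ) : Prop :=
  Nonempty (H ≃g SimpleGraph.pathGraph n)

/-- A graph is factor-critical if deleting any vertex leaves a graph with a perfect
matching. -/
def IsFactorCritical {W : Type*} (R : SimpleGraph W) : Prop :=
  ∀ x : W, ∃ M : (R.induce {y : W | y ≠ x}).Subgraph, M.IsPerfectMatching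

/-- `H` is a sun: `H = K₁`, `H = K₂`, or `H` is obtained from a factor-critical graph `R`
(its core, here an induced subgraph on a vertex set `R`) by attaching to each core vertex
`v` a pendant vertex `p v` whose unique neighbor is `v`. -/
def IsSun {W : Type*} (H : SimpleGraph W) : Prop :=
  Nat.card W = 1 ∨
  (Nat.card W = 2 ∧ ∀ u v : W, u ≠ v → H.Adj u v) ∨
  ∃ (R : Set W) (p : R ≃ (Rᶜ : Set W)),
    IsFactorCritical (H.induce R) ∧
    (∀ v : R, H.Adj (↑v) (↑(p v))) ∧
    (∀ u : (Rᶜ : Set W), ∀ x : W, H.Adj (↑u) x ↔ x = ↑(p.symm u))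

/-- The number of connected components of `G − S` that are suns. -/
noncomputable def sunCount {V : Type*} [Fintype V] (G : SimpleGraph V) (S : Set V) : ℕ :=
  Nat.card {c : (G.induce Sᶜ).ConnectedComponent //
    IsSun ((G.induce Sᶜ).induce c.supp)}

/-- `H` has a `{P₃, P₄, P₅}`-factor: a spanning subgraph each of whose components is a
path on 3, 4, or 5 vertices. -/
def HasPPPFactor {W : Type*} (H : SimpleGraph W) : Prop :=
  ∃ F : SimpleGraph W, F ≤ H ∧ ∀ c : F.ConnectedComponent,
    IsPathOn (F.induce c.supp) 3 ∨ IsPathOn (F.induce c.supp) 4 ∨ IsPathOn (F.induce c.supp) 5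

/-- Claim 1(2): let `D` be a sun on at least 3 vertices with core `R` (pendant bijection
`p : R ≃ Rᶜ`), and let `w` be any vertex of the core. Then `D` has a `{P₄}`-packing `F₂`
covering every vertex of `D` except `w` and its pendant `p w`. -/
theorem sun_P4_packing {V : Type*} [Fintype V] (D : SimpleGraph V)
    (hcard : 3 ≤ Nat.card V)
    (R : Set V) (p : R ≃ (Rᶜ : Set V))
    (hfc : IsFactorCritical (D.induce R))
    (hadj : ∀ v : R, D.Adj (↑v) (↑(p v)))
    (hpend : ∀ u : (Rᶜ : Set V), ∀ x : V, D.Adj (↑u) x ↔ x = ↑(p.symm u))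
    (w : R) :
    ∃ F₂ : SimpleGraph V, F₂ ≤ D ∧
      F₂.support = ({(↑w : V), (↑(p w) : V)} : Set V)ᶜ ∧
      ∀ c : F₂.ConnectedComponent, (c.supp).Nontrivial →
        IsPathOn (F₂.induce c.supp) 4 := by
  classical
  obtain ⟨M, hM⟩ := hfc w
  have hpart : ∀ a : ↥{y : R | y ≠ w}, ∃! b, M.Adj a b := fun a => hM.1 (hM.2 a)
  let f : ∀ _ : ↥{y : R | y ≠ w}, ↥{y : R | y ≠ w} := fun a => (hpart a).choose
  have hf : ∀ a, M.Adj a (f a) := fun a => (hpart a).choose_spec.1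
  have huniq : ∀ a b, M.Adj a b → b = f a := fun a b h => (hpart a).choose_spec.2 b h
  have hff : ∀ a, f (f a) = a := fun a => (huniq (f a) a (hf a).symm).symm
  have hafa : ∀ a, a ≠ f a := fun a => (M.adj_sub (hf a)).ne
  have hD : ∀ a b : ↥{y : R | y ≠ w}, M.Adj a b → D.Adj (a.1 : V) (b.1 : V) := fun a b h => M.adj_sub h
  -- the two vertex injections
  let ι : ↥{y : R | y ≠ w} → V := fun a => (a.1 : V)
  let P : ↥{y : R | y ≠ w} → V := fun a => (p a.1 : V)
  have hι_inj : Function.Injective ι := fun a b h =>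
    Subtype.ext (Subtype.coe_injective h)
  have hP_inj : Function.Injective P := fun a b h =>
    Subtype.ext (p.injective (Subtype.coe_injective h))
  have hιR : ∀ a, ι a ∈ R := fun a => a.1.2
  have hPc : ∀ a, P a ∉ R := fun a => (p a.1).2
  have hιP : ∀ a b, ι a ≠ P b := fun a b h => hPc b (h ▸ hιR a)
  have hιw : ∀ a, ι a ≠ (↑w : V) := fun a h => a.2 (Subtype.coe_injective h)
  have hιpw : ∀ a, ι a ≠ (↑(p w) : V) := fun a h => (p w).2 (h ▸ hιR a)
  have hPw : ∀ a, P a ≠ (↑w : V) := fun a h => hPc a (h ▸ w.2)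
  have hPpw : ∀ a, P a ≠ (↑(p w) : V) := fun a h =>
    a.2 (p.injective (Subtype.coe_injective h))
  -- the packing
  let rel : V → V → Prop := fun x y =>
    (∃ a : ↥{y : R | y ≠ w}, ι a = x ∧ ι (f a) = y) ∨ (∃ a : ↥{y : R | y ≠ w}, ι a = x ∧ P a = y)
  let F₂ : SimpleGraph V := SimpleGraph.fromRel rel
  have hF2adj : ∀ x y, F₂.Adj x y ↔ x ≠ y ∧ (rel x y ∨ rel y x) := fun x y =>
    SimpleGraph.fromRel_adj rel x y
  -- edges
  have hEp : ∀ a, F₂.Adj (ι a) (P a) := by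
    intro a
    exact (hF2adj _ _).2 ⟨hιP a a, Or.inl (Or.inr ⟨a, rfl, rfl⟩)⟩
  have hEm : ∀ a, F₂.Adj (ι a) (ι (f a)) := by
    intro a
    exact (hF2adj _ _).2 ⟨fun h => hafa a (hι_inj h), Or.inl (Or.inl ⟨a, rfl, rfl⟩)⟩
  -- neighbor characterizations
  have hnbrι : ∀ a x, F₂.Adj (ι a) x ↔ (x = P a ∨ x = ι (f a)) := by
    intro a x
    constructor
    · intro h
      rcases (hF2adj _ _).1 h with ⟨hne, hr | hr⟩
      · rcases hr with ⟨b, hb1, hb2⟩ | ⟨b, hb1, hb2⟩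
        · obtain rfl : b = a := hι_inj hb1
          exact Or.inr hb2.symm
        · obtain rfl : b = a := hι_inj hb1
          exact Or.inl hb2.symm
      · rcases hr with ⟨b, hb1, hb2⟩ | ⟨b, hb1, hb2⟩
        · obtain rfl : f b = a := hι_inj hb2
          refine Or.inr ?_
          rw [← hb1]
          exact congrArg ι (huniq (f b) b (hf b).symm)
        · exact absurd hb2.symm (hιP a b)
    · rintro (rfl | rfl)
      exacts [hEp a, hEm a]
  have hnbrP : ∀ a x, F₂.Adj (P a) x ↔ x = ι a := by
    intro a x
    constructor
    · intro h
      rcases (hF2adj _ _).1 h with ⟨hne, hr | hr⟩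
      · rcases hr with ⟨b, hb1, hb2⟩ | ⟨b, hb1, hb2⟩
        · exact absurd hb1 (hιP b a)
        · exact absurd hb1 (hιP b a)
      · rcases hr with ⟨b, hb1, hb2⟩ | ⟨b, hb1, hb2⟩
        · exact absurd hb2 (hιP (f b) a)
        · obtain rfl : b = a := hP_inj hb2
          exact hb1.symm
    · rintro rfl
      exact (hEp a).symm
  -- any endpoint of an edge is ι a or P a
  have hend : ∀ x y, F₂.Adj x y → ∃ a : ↥{y : R | y ≠ w}, x = ι a ∨ x = P a := by
    intro x y h
    rcases (hF2adj _ _).1 h with ⟨-, hr | hr⟩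
    · rcases hr with ⟨b, hb1, -⟩ | ⟨b, hb1, -⟩
      exacts [⟨b, Or.inl hb1.symm⟩, ⟨b, Or.inl hb1.symm⟩]
    · rcases hr with ⟨b, -, hb2⟩ | ⟨b, -, hb2⟩
      exacts [⟨f b, Or.inl hb2.symm⟩, ⟨b, Or.inr hb2.symm⟩]
  refine ⟨F₂, ?_, ?_, ?_⟩
  · -- F₂ ≤ D
    intro x y h
    rcases (hF2adj _ _).1 h with ⟨-, hr | hr⟩
    · rcases hr with ⟨b, hb1, hb2⟩ | ⟨b, hb1, hb2⟩
      · exact hb1 ▸ hb2 ▸ hD b (f b) (hf b)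
      · exact hb1 ▸ hb2 ▸ hadj b.1
    · rcases hr with ⟨b, hb1, hb2⟩ | ⟨b, hb1, hb2⟩
      · exact hb1 ▸ hb2 ▸ (hD b (f b) (hf b)).symm
      · exact hb1 ▸ hb2 ▸ (hadj b.1).symm
  · -- support
    ext x
    simp only [SimpleGraph.mem_support, Set.mem_compl_iff, Set.mem_insert_iff,
      Set.mem_singleton_iff]
    constructor
    · rintro ⟨y, h⟩
      obtain ⟨a, rfl | rfl⟩ := hend x y h
      · exact fun h => h.elim (hιw a) (hιpw a)
      · exact fun h => h.elim (hPw a) (hPpw a)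
    · intro hx
      by_cases hxR : x ∈ R
      · have hne : (⟨x, hxR⟩ : R) ≠ w := fun h => hx (Or.inl (congrArg Subtype.val h))
        exact ⟨P ⟨⟨x, hxR⟩, hne⟩, hEp ⟨⟨x, hxR⟩, hne⟩⟩
      · have hxc : x ∈ Rᶜ := hxR
        set r := p.symm ⟨x, hxc⟩ with hr
        have hrw : r ≠ w := by
          intro h
          apply hx
          right
          rw [← h, hr, Equiv.apply_symm_apply]
        have hx' : x = P ⟨r, hrw⟩ := by
          show x = ((p r : (Rᶜ : Set V)) : V)
          rw [hr, Equiv.apply_symm_apply]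
        exact ⟨ι ⟨r, hrw⟩, hx' ▸ (hEp ⟨r, hrw⟩).symm⟩
  · -- components
    intro c hcnt
    -- component supports
    have hT : ∀ a : ↥{y : R | y ≠ w}, ∀ u v : V, F₂.Adj u v →
        u ∈ ({P a, ι a, ι (f a), P (f a)} : Set V) →
        v ∈ ({P a, ι a, ι (f a), P (f a)} : Set V) := by
      intro a u v huv hu
      simp only [Set.mem_insert_iff, Set.mem_singleton_iff] at hu ⊢
      rcases hu with rfl | rfl | rfl | rfl
      · rw [hnbrP] at huv; tauto
      · rw [hnbrι] at huv; tauto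
      · rw [hnbrι] at huv
        rw [hff] at huv; tauto
      · rw [hnbrP] at huv; tauto
    have hwalk : ∀ a : ↥{y : R | y ≠ w}, ∀ u v : V, F₂.Walk u v →
        u ∈ ({P a, ι a, ι (f a), P (f a)} : Set V) →
        v ∈ ({P a, ι a, ι (f a), P (f a)} : Set V) := by
      intro a u v walk
      induction walk with
      | nil => exact id
      | cons h _ ih => exact fun hu => ih (hT a _ _ h hu)
    -- obtain a with c = mk (ι a)
    obtain ⟨x, hx, y, hy, hxy⟩ := hcnt
    rw [SimpleGraph.ConnectedComponent.mem_supp_iff] at hx hy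
    have hreach : F₂.Reachable x y := by
      rw [← SimpleGraph.ConnectedComponent.eq, hx, hy]
    obtain ⟨walk⟩ := hreach
    have hxadj : ∃ z, F₂.Adj x z := by
      cases walk with
      | nil => exact absurd rfl hxy
      | cons h _ => exact ⟨_, h⟩
    obtain ⟨z, hz⟩ := hxadj
    obtain ⟨a, hxa⟩ := hend x z hz
    have hc : c = F₂.connectedComponentMk (ι a) := by
      rcases hxa with rfl | rfl
      · exact hx.symm
      · rw [← hx]
        exact SimpleGraph.ConnectedComponent.connectedComponentMk_eq_of_adj (hEp a).symm
    -- supp = the 4-element set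
    have hsupp : c.supp = ({P a, ι a, ι (f a), P (f a)} : Set V) := by
      ext v
      rw [hc, SimpleGraph.ConnectedComponent.mem_supp_iff,
        SimpleGraph.ConnectedComponent.eq]
      constructor
      · rintro ⟨walk⟩
        exact hwalk a _ _ walk.reverse (by simp)
      · intro hv
        simp only [Set.mem_insert_iff, Set.mem_singleton_iff] at hv
        rcases hv with rfl | rfl | rfl | rfl
        · exact (hEp a).symm.reachable
        · exact SimpleGraph.Reachable.refl _
        · exact (hEm a).symm.reachable
        · exact ((hEm a).symm.reachable).symm.trans (hEp (f a)).reachable |>.symm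
    -- build the isomorphism
    have hd01 : P a ≠ ι a := (hιP a a).symm
    have hd02 : P a ≠ ι (f a) := (hιP (f a) a).symm
    have hd03 : P a ≠ P (f a) := fun h => hafa a (hP_inj h)
    have hd12 : ι a ≠ ι (f a) := fun h => hafa a (hι_inj h)
    have hd13 : ι a ≠ P (f a) := hιP a (f a)
    have hd23 : ι (f a) ≠ P (f a) := hιP (f a) (f a)
    let vtx : Fin 4 → V := ![P a, ι a, ι (f a), P (f a)]
    have hmem : ∀ i, vtx i ∈ c.supp := by
      intro i
      rw [hsupp]
      fin_cases i <;> simp [vtx]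
    let e : Fin 4 → c.supp := fun i => ⟨vtx i, hmem i⟩
    have hbij : Function.Bijective e := by
      constructor
      · intro i j hij
        have : vtx i = vtx j := congrArg Subtype.val hij
        fin_cases i <;> fin_cases j <;>
          first
          | rfl
          | (exfalso; revert this; simp [vtx];
             first
             | exact hd01 | exact hd02 | exact hd03 | exact hd12 | exact hd13 | exact hd23
             | exact hd01.symm | exact hd02.symm | exact hd03.symm | exact hd12.symm
             | exact hd13.symm | exact hd23.symm)
      · rintro ⟨v, hv⟩
        rw [hsupp] at hv
        simp only [Set.mem_insert_iff, Set.mem_singleton_iff] at hv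
        rcases hv with rfl | rfl | rfl | rfl
        · exact ⟨0, rfl⟩
        · exact ⟨1, rfl⟩
        · exact ⟨2, rfl⟩
        · exact ⟨3, rfl⟩
    -- non-adjacencies
    have hn02 : ¬ F₂.Adj (P a) (ι (f a)) := by
      rw [hnbrP]; exact fun h => hd12.symm h
    have hn03 : ¬ F₂.Adj (P a) (P (f a)) := by
      rw [hnbrP]; exact fun h => hd13.symm h
    have hn13 : ¬ F₂.Adj (ι a) (P (f a)) := by
      rw [hnbrι]
      rintro (h | h)
      · exact hd03.symm h
      · exact hd23.symm h
    have hE23 : F₂.Adj (ι (f a)) (P (f a)) := hEp (f a)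
    have hE12 : F₂.Adj (ι a) (ι (f a)) := hEm a
    have hE01 : F₂.Adj (P a) (ι a) := (hEp a).symm
    have hAdj : ∀ i j : Fin 4, F₂.Adj (vtx i) (vtx j) ↔
        ((i : ℕ) + 1 = (j : ℕ) ∨ (j : ℕ) + 1 = (i : ℕ)) := by
      intro i j
      fin_cases i <;> fin_cases j
      · exact iff_of_false (F₂.loopless.irrefl _) (by decide)
      · exact iff_of_true hE01 (by decide)
      · exact iff_of_false hn02 (by decide)
      · exact iff_of_false hn03 (by decide)
      · exact iff_of_true hE01.symm (by decide)
      · exact iff_of_false (F₂.loopless.irrefl _) (by decide)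
      · exact iff_of_true hE12 (by decide)
      · exact iff_of_false hn13 (by decide)
      · exact iff_of_false (fun h => hn02 h.symm) (by decide)
      · exact iff_of_true hE12.symm (by decide)
      · exact iff_of_false (F₂.loopless.irrefl _) (by decide)
      · exact iff_of_true hE23 (by decide)
      · exact iff_of_false (fun h => hn03 h.symm) (by decide)
      · exact iff_of_false (fun h => hn13 h.symm) (by decide)
      · exact iff_of_true hE23.symm (by decide)
      · exact iff_of_false (F₂.loopless.irrefl _) (by decide)
    refine ⟨(?_ : (SimpleGraph.pathGraph 4) ≃g (F₂.induce c.supp)).symm⟩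
    refine ⟨Equiv.ofBijective e hbij, ?_⟩
    intro i j
    show F₂.Adj (vtx i) (vtx j) ↔ _
    rw [SimpleGraph.pathGraph_adj]
    exact hAdj i j
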